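/- For all integers n ≥ 1 and m ≥ 1, one has Σ_{k=0}^{n} (−1)^{n−k} f^A_k(n,m) = (1/(n+1))·C((n+1)m, n); that is, the reduced Euler characteristic of Δ^m(A_n) equals (−1)^{n−1} times the number of maximal simplices of Δ^{m−1}(A_n). -/
import Mathlib


open Finset

/-- The binomial coefficient `C(a, b)` for integers `a, b`, with the convention
that it vanishes unless `0 ≤ b ≤ a`. -/
def cc (a b : ℤ) : ℚ :=
  if 0 ≤ b ∧ b ≤ a then (a.toNat.choose b.toNat : ℚ) else 0

/-- The type-A face numbers `f^A_k(n, m) = (1/(k+1))·C(n,k)·C((n+1)m+k+1, k)`: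
the number of `k`-element faces of the generalized cluster complex `Δ^m(A_n)`. -/
def fA (n m k : ℕ) : ℚ :=
  1 / ((k : ℚ) + 1) * cc n k * cc (((n : ℤ) + 1) * m + k + 1) k

/-- The type-B face numbers `f^B_k(n, m) = C(n,k)·C(nm+k, k)`:
the number of `k`-element faces of the generalized cluster complex `Δ^m(B_n)`. -/
def fB (n m k : ℕ) : ℚ :=
  cc n k * cc ((n : ℤ) * m + k) k

/-- The type-D face numbers
`f^D_k(n, m) = C(n,k)·C((n-1)m+k, k) + C(n-2,k-2)·C((n-1)m+k-1, k)`: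
the number of `k`-element faces of the generalized cluster complex `Δ^m(D_n)`. -/
def fD (n m k : ℕ) : ℚ :=
  cc n k * cc (((n : ℤ) - 1) * m + k) k
    + cc ((n : ℤ) - 2) ((k : ℤ) - 2) * cc (((n : ℤ) - 1) * m + k - 1) k

/-- `Σ_{k=0}^{n} (−1)^{n−k} f^A_k(n,m) = (1/(n+1))·C((n+1)m, n)`: the reduced Euler
characteristic of `Δ^m(A_n)` equals `(−1)^{n−1}` times the number of maximal
simplices of `Δ^{m−1}(A_n)`. -/



lemma key (r : ℕ) : ∀ N : ℕ, N ≤ r → ∀ M : ℕ,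
    ∑ j ∈ range (N+1), (-1:ℚ)^j * (N.choose j) * ((M+j).choose r)
      = (-1)^N * (M.choose (r - N) : ℚ) := by
  intro N
  induction N with
  | zero => intro _ M; simp
  | succ N ih =>
    intro hNr M
    have hN : N ≤ r := Nat.le_of_succ_le hNr
    have hB : ∑ j ∈ range (N+1+1), (-1:ℚ)^j * (N.choose j) * ((M+j).choose r)
        = (∑ i ∈ range (N+1), (-1:ℚ)^(i+1) * (N.choose (i+1)) * ((M+(i+1)).choose r))
          + (M.choose r : ℚ) := by
      rw [Finset.sum_range_succ']
      simp
    have hB' : ∑ j ∈ range (N+1+1), (-1:ℚ)^j * (N.choose j) * ((M+j).choose r)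
        = ∑ j ∈ range (N+1), (-1:ℚ)^j * (N.choose j) * ((M+j).choose r) := by
      rw [Finset.sum_range_succ, Nat.choose_succ_self]
      simp
    have step : ∑ j ∈ range (N+1+1), (-1:ℚ)^j * ((N+1).choose j) * ((M+j).choose r)
        = (∑ j ∈ range (N+1), (-1:ℚ)^j * (N.choose j) * ((M+j).choose r))
          - ∑ j ∈ range (N+1), (-1:ℚ)^j * (N.choose j) * ((M+1+j).choose r) := by
      rw [Finset.sum_range_succ' _ (N+1)]
      have hpt : ∀ i ∈ range (N+1),
          (-1:ℚ)^(i+1) * ((N+1).choose (i+1)) * ((M+(i+1)).choose r)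
          = ((-1:ℚ)^(i+1) * (N.choose (i+1)) * ((M+(i+1)).choose r))
            + (-((-1:ℚ)^i * (N.choose i) * ((M+1+i).choose r))) := by
        intro i _
        have h1 : M + 1 + i = M + (i+1) := by omega
        rw [Nat.choose_succ_succ, h1]
        push_cast
        ring
      rw [Finset.sum_congr rfl hpt, Finset.sum_add_distrib, Finset.sum_neg_distrib]
      have := hB.symm.trans hB'
      simp only [pow_zero, Nat.choose_zero_right, Nat.cast_one, one_mul, Nat.add_zero]
      linarith [this]
    rw [step, ih hN M, ih hN (M+1)]
    have hrs : r - N = (r - (N+1)) + 1 := by omega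
    have hpas : ((M+1).choose (r - N) : ℚ) = (M.choose (r-(N+1)) : ℚ) + (M.choose (r-N) : ℚ) := by
      rw [hrs]
      exact_mod_cast congrArg (Nat.cast : ℕ → ℚ) (Nat.choose_succ_succ M (r-(N+1)))
    rw [hpas]
    ring

lemma cc_natCast (a b : ℕ) : cc (a : ℤ) (b : ℤ) = (a.choose b : ℚ) := by
  unfold cc
  split
  · simp
  · next h =>
    push_neg at h
    have : a < b := by exact_mod_cast h (by positivity)
    rw [Nat.choose_eq_zero_of_lt this]; simp

theorem euler_characteristic_type_A (n m : ℕ) (hn : 1 ≤ n) (hm : 1 ≤ m) :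
    ∑ k ∈ Finset.range (n + 1), (-1 : ℚ) ^ (n - k) * fA n m k
      = 1 / ((n : ℚ) + 1) * cc (((n : ℤ) + 1) * m) n := by
  set M := (n+1)*m with hM
  have hnM : n + 1 ≤ M := le_mul_of_one_le_right (by omega) hm
  have hRHS : cc (((n : ℤ) + 1) * m) n = (M.choose n : ℚ) := by
    rw [show ((n : ℤ)+1)*m = ((M : ℕ) : ℤ) by rw [hM]; push_cast; ring, cc_natCast]
  have hn1 : (n:ℚ) + 1 ≠ 0 := by positivity
  have hsummand : ∀ k ∈ range (n+1), (-1:ℚ)^(n-k) * fA n m k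
      = (-(-1:ℚ)^n / (n+1)) *
        ((-1:ℚ)^(k+1) * (((n+1).choose (k+1) : ℕ) : ℚ) * (((M+(k+1)).choose (M+1) : ℕ) : ℚ)) := by
    intro k hk
    have hkn : k ≤ n := by simpa using Nat.lt_succ_iff.mp (mem_range.mp hk)
    have hk1 : (k:ℚ) + 1 ≠ 0 := by positivity
    have hsq : (-1:ℚ)^k * (-1)^k = 1 := by
      rw [← pow_add, show k+k=2*k from by ring, pow_mul]; norm_num
    have hsign : (-1:ℚ)^(n-k) = (-1)^n * (-1)^k := by
      have h1 : (-1:ℚ)^n = (-1)^(n-k) * (-1)^k := by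
        rw [← pow_add, Nat.sub_add_cancel hkn]
      rw [h1, mul_assoc, hsq, mul_one]
    have hcc1 : cc (n:ℤ) (k:ℤ) = (n.choose k : ℚ) := cc_natCast n k
    have hcc2 : cc (((n : ℤ) + 1) * m + k + 1) k = (((M+(k+1)).choose k : ℕ) : ℚ) := by
      rw [show ((n : ℤ)+1)*m + k + 1 = ((M + (k+1) : ℕ) : ℤ) by rw [hM]; push_cast; ring,
        cc_natCast]
    have hsymm : (M+(k+1)).choose k = (M+(k+1)).choose (M+1) := by
      have := Nat.choose_symm (n := M+(k+1)) (k := k) (by omega)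
      rw [show M + (k+1) - k = M + 1 by omega] at this
      exact this.symm
    have hfacQ : ((n:ℚ)+1) * (n.choose k) = (((n+1).choose (k+1) : ℕ) : ℚ) * ((k:ℚ)+1) := by
      exact_mod_cast congrArg (Nat.cast : ℕ → ℚ) (Nat.add_one_mul_choose_eq n k)
    have hdiv : 1/((k:ℚ)+1) * ((n.choose k : ℕ) : ℚ)
        = 1/((n:ℚ)+1) * (((n+1).choose (k+1) : ℕ) : ℚ) := by
      field_simp
      linear_combination hfacQ
    rw [fA, hcc1, hcc2, hsymm, hsign, hdiv, pow_succ]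
    ring
  rw [Finset.sum_congr rfl hsummand, ← Finset.mul_sum]
  have hkey := key (M+1) (n+1) (by omega) M
  rw [Finset.sum_range_succ' _ (n+1)] at hkey
  have h0 : ((M.choose (M+1) : ℕ) : ℚ) = 0 := by
    norm_cast
    exact Nat.choose_eq_zero_of_lt (by omega)
  simp only [pow_zero, Nat.choose_zero_right, Nat.cast_one, one_mul, Nat.add_zero, h0,
    mul_zero, add_zero] at hkey
  rw [hkey, hRHS]
  rw [show M + 1 - (n+1) = M - n by omega, show M.choose (M-n) = M.choose n from by
    rw [← Nat.choose_symm (by omega : n ≤ M)]]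
  have hsq : (-1:ℚ)^n * (-1)^n = 1 := by
    rw [← pow_add, show n+n=2*n from by ring, pow_mul]; norm_num
  have h3 : -(-1:ℚ)^n * (-1)^(n+1) = 1 := by
    rw [pow_succ, show -(-1:ℚ)^n * ((-1)^n * -1) = (-1)^n * (-1)^n from by ring, hsq]
  linear_combination ((M.choose n : ℚ)/((n:ℚ)+1)) * h3
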